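/- If α_1, …, α_J ∈ (-1,1) are distinct and σ_1, …, σ_J > 0, then the J×J matrix with (j,k) entry (σ_j²/(1-α_j²)) · (2/(1-α_j α_k) - 1) · (σ_k²/(1-α_k²)) is positive definite. -/

import Mathlib

/-- The Gram matrix of AR(1) spectral densities, with `(j,k)` entry
`(σ_j²/(1-α_j²)) · (2/(1-α_j α_k) - 1) · (σ_k²/(1-α_k²))`, is positive definite
whenever the `α_j ∈ (-1,1)` are distinct and the `σ_j` are positive. -/
theorem ar1_gram_posDef (J : ℕ) (α σ : Fin J → ℝ)
    (hα : ∀ j, α j ∈ Set.Ioo (-1 : ℝ) 1)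
    (hinj : Function.Injective α)
    (hσ : ∀ j, 0 < σ j) :
    (Matrix.of fun j k : Fin J =>
      (σ j ^ 2 / (1 - α j ^ 2)) * (2 / (1 - α j * α k) - 1) *
        (σ k ^ 2 / (1 - α k ^ 2))).PosDef := by
  have habs : ∀ j, |α j| < 1 := fun j => abs_lt.2 ⟨(hα j).1, (hα j).2⟩
  have habs2 : ∀ j k, |α j * α k| < 1 := by
    intro j k
    rw [abs_mul]
    nlinarith [abs_nonneg (α j), abs_nonneg (α k), habs j, habs k]
  set c : Fin J → ℝ := fun j => σ j ^ 2 / (1 - α j ^ 2) with hc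
  have hcpos : ∀ j, 0 < c j := by
    intro j
    have h1 : (0:ℝ) < 1 - α j ^ 2 := by nlinarith [habs j, abs_nonneg (α j), sq_abs (α j)]
    exact div_pos (pow_pos (hσ j) 2) h1
  refine Matrix.PosDef.of_dotProduct_mulVec_pos ?_ ?_
  · show _ = _
    ext j k
    simp [Matrix.conjTranspose_apply]
    ring_nf
  · intro x hx
    -- y j = x j * c j
    set y : Fin J → ℝ := fun j => x j * c j with hy
    have hy0 : y ≠ 0 := by
      intro h
      apply hx
      funext j
      have := congrFun h j
      simp only [hy, Pi.zero_apply] at this ⊢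
      exact (mul_eq_zero.1 this).resolve_right (ne_of_gt (hcpos j))
    set s : ℕ → ℝ := fun ℓ => ∑ j, y j * α j ^ ℓ with hs
    -- summability
    have hsum1 : ∀ j k : Fin J, Summable (fun ℓ : ℕ => (y j * y k) * (α j * α k) ^ ℓ) :=
      fun j k => (summable_geometric_of_abs_lt_one (habs2 j k)).mul_left _
    have hsq : ∀ ℓ : ℕ, s ℓ ^ 2 = ∑ j, ∑ k, (y j * y k) * (α j * α k) ^ ℓ := by
      intro ℓ
      rw [sq, hs, Finset.sum_mul_sum]
      congr 1; funext j; congr 1; funext k; ring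
    have hsumsq : Summable (fun ℓ => s ℓ ^ 2) := by
      have : Summable (fun ℓ : ℕ => ∑ j, ∑ k, (y j * y k) * (α j * α k) ^ ℓ) :=
        summable_sum (fun j _ => summable_sum (fun k _ => hsum1 j k))
      exact this.congr fun ℓ => (hsq ℓ).symm
    -- the quadratic form equals 2 * ∑' ℓ, s ℓ ^ 2 - s 0 ^ 2
    have key : dotProduct (star x) ((Matrix.of fun j k : Fin J =>
        (σ j ^ 2 / (1 - α j ^ 2)) * (2 / (1 - α j * α k) - 1) *
          (σ k ^ 2 / (1 - α k ^ 2))).mulVec x)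
        = 2 * (∑' ℓ, s ℓ ^ 2) - s 0 ^ 2 := by
      have step1 : dotProduct (star x) ((Matrix.of fun j k : Fin J =>
          (σ j ^ 2 / (1 - α j ^ 2)) * (2 / (1 - α j * α k) - 1) *
            (σ k ^ 2 / (1 - α k ^ 2))).mulVec x)
          = ∑ j, ∑ k, (y j * y k) * (2 / (1 - α j * α k) - 1) := by
        simp only [dotProduct, Matrix.mulVec, star_trivial, Matrix.of_apply,
          Finset.mul_sum]
        refine Finset.sum_congr rfl fun j _ => Finset.sum_congr rfl fun k _ => ?_
        simp only [hy, hc]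
        ring
      rw [step1]
      have step2 : ∀ j k : Fin J, (y j * y k) * (2 / (1 - α j * α k) - 1)
          = 2 * (∑' ℓ : ℕ, (y j * y k) * (α j * α k) ^ ℓ) - y j * y k := by
        intro j k
        rw [tsum_mul_left, tsum_geometric_of_abs_lt_one (habs2 j k)]
        field_simp
      rw [Finset.sum_congr rfl fun j _ => Finset.sum_congr rfl fun k _ => step2 j k]
      have swap : ∑ j, ∑ k, (∑' ℓ : ℕ, (y j * y k) * (α j * α k) ^ ℓ)
          = ∑' ℓ, s ℓ ^ 2 := by
        rw [show (∑' ℓ, s ℓ ^ 2) = ∑' ℓ : ℕ, ∑ j, ∑ k, (y j * y k) * (α j * α k) ^ ℓ from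
          tsum_congr hsq]
        rw [Summable.tsum_finsetSum (fun j _ => summable_sum (fun k _ => hsum1 j k))]
        exact Finset.sum_congr rfl fun j _ =>
          (Summable.tsum_finsetSum (fun k _ => hsum1 j k)).symm
      have s0 : s 0 ^ 2 = ∑ j, ∑ k, y j * y k := by
        rw [hsq 0]; simp
      simp only [Finset.sum_sub_distrib, ← Finset.mul_sum, swap]
      rw [s0]
      congr 1
      exact Finset.sum_congr rfl fun j _ => Finset.mul_sum _ _ _
    rw [key]
    -- s is not identically zero (Vandermonde)
    have hne : ∃ ℓ, s ℓ ≠ 0 := by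
      by_contra h
      push_neg at h
      apply hy0
      have hdet : ((Matrix.vandermonde α).transpose).det ≠ 0 := by
        rw [Matrix.det_transpose]
        exact Matrix.det_vandermonde_ne_zero_iff.2 hinj
      apply Matrix.eq_zero_of_mulVec_eq_zero hdet
      funext i
      have := h (i : ℕ)
      simp only [hs] at this
      simp only [Matrix.mulVec, dotProduct, Matrix.transpose_apply,
        Matrix.vandermonde, Pi.zero_apply, Matrix.of_apply]
      rw [← this]
      exact Finset.sum_congr rfl fun j _ => by ring
    obtain ⟨ℓ0, hℓ0⟩ := hne
    have hA : 0 < ∑' ℓ, s ℓ ^ 2 :=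
      Summable.tsum_pos hsumsq (fun ℓ => sq_nonneg _) ℓ0 (by positivity)
    have hle : s 0 ^ 2 ≤ ∑' ℓ, s ℓ ^ 2 :=
      Summable.le_tsum hsumsq 0 fun j _ => sq_nonneg _
    linarith
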